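/- Let R : ℝ^d → ℝ be a lower semicontinuous convex function, let A ∈ ℝ^{d×d} be symmetric positive definite, let ζ ∈ ℝ^d, and let w' = prox_R^{A^{-1}}(w − Aζ) for some w ∈ ℝ^d. Then for every z ∈ ℝ^d, R(w') ≤ R(z) + ⟨z − w', ζ⟩ + (1/2)[ ‖z − w‖_{A^{-1}}² − ‖w' − w‖_{A^{-1}}² − ‖w' − z‖_{A^{-1}}² ]. -/

import Mathlib

open scoped BigOperators RealInnerProductSpace

abbrev Euc (d : ℕ) := EuclideanSpace ℝ (Fin d)

noncomputable def mdot {d : ℕ} (M : Matrix (Fin d) (Fin d) ℝ) (x : Euc d) : Euc d :=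
  Matrix.toEuclideanLin M x

noncomputable def qf {d : ℕ} (M : Matrix (Fin d) (Fin d) ℝ) (x : Euc d) : ℝ :=
  ⟪x, mdot M x⟫

def IsProxR {d : ℕ} (R : Euc d → ℝ) (M : Matrix (Fin d) (Fin d) ℝ) (w u : Euc d) : Prop :=
  ∀ y, 2⁻¹ * qf M (u - w) + R u ≤ 2⁻¹ * qf M (y - w) + R y

section aux
variable {d : ℕ} (M : Matrix (Fin d) (Fin d) ℝ)

lemma mdot_add (x y : Euc d) : mdot M (x + y) = mdot M x + mdot M y := map_add _ _ _
lemma mdot_sub (x y : Euc d) : mdot M (x - y) = mdot M x - mdot M y := map_sub _ _ _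
lemma mdot_smul (t : ℝ) (x : Euc d) : mdot M (t • x) = t • mdot M x := map_smul _ _ _
lemma mdot_neg (x : Euc d) : mdot M (-x) = -mdot M x := map_neg _ _

lemma inner_mdot_symm {M : Matrix (Fin d) (Fin d) ℝ} (hM : M.IsHermitian) (x y : Euc d) :
    ⟪x, mdot M y⟫ = ⟪y, mdot M x⟫ := by
  have h := (Matrix.isHermitian_iff_isSymmetric.mp hM) y x
  simp only [mdot]
  rw [← h, real_inner_comm]

lemma qf_nonneg {M : Matrix (Fin d) (Fin d) ℝ} (hM : M.PosSemidef) (x : Euc d) :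
    0 ≤ qf M x := by
  have h := hM.re_dotProduct_nonneg ((WithLp.equiv 2 _) x)
  simpa [qf, mdot, Matrix.toEuclideanLin_apply, PiLp.inner_apply, dotProduct, mul_comm,
    RCLike.re_to_real] using h

lemma qf_neg (x : Euc d) : qf M (-x) = qf M x := by
  simp [qf, mdot_neg]

lemma qf_expand {M : Matrix (Fin d) (Fin d) ℝ} (hM : M.IsHermitian) (p q : Euc d) :
    qf M (p + q) = qf M p + 2 * ⟪q, mdot M p⟫ + qf M q := by
  have h := inner_mdot_symm hM p q
  simp only [qf, mdot_add, inner_add_left, inner_add_right]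
  rw [h]; ring

end aux

theorem prox_step_inequality {d : ℕ} (R : Euc d → ℝ)
    (hlsc : LowerSemicontinuous R) (hconv : ConvexOn ℝ Set.univ R)
    (A : Matrix (Fin d) (Fin d) ℝ) (hA : A.PosDef) (ζ w w' : Euc d)
    (hprox : IsProxR R A⁻¹ (w - mdot A ζ) w') :
    ∀ z : Euc d,
      R w' ≤ R z + ⟪z - w', ζ⟫
        + 2⁻¹ * (qf A⁻¹ (z - w) - qf A⁻¹ (w' - w) - qf A⁻¹ (w' - z)) := by
  intro z
  have hAinv : (A⁻¹).PosDef := hA.inv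
  have hH : (A⁻¹).IsHermitian := hAinv.1
  set v : Euc d := w - mdot A ζ with hv
  set p : Euc d := z - w' with hp
  set c : ℝ := ⟪w' - v, mdot A⁻¹ p⟫ with hc
  -- key inequality for small t
  have key : ∀ t : ℝ, 0 < t → t ≤ 1 → R w' ≤ R z + c + t / 2 * qf A⁻¹ p := by
    intro t ht ht1
    have h1 := hprox (w' + t • p)
    have hq : qf A⁻¹ (w' + t • p - v) = qf A⁻¹ (w' - v) + 2 * (t * c) + t ^ 2 * qf A⁻¹ p := by
      have : w' + t • p - v = (w' - v) + t • p := by abel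
      rw [this, qf_expand hH]
      have h2 : ⟪t • p, mdot A⁻¹ (w' - v)⟫ = t * ⟪w' - v, mdot A⁻¹ p⟫ := by
        rw [real_inner_smul_left, inner_mdot_symm hH]
      have h3 : qf A⁻¹ (t • p) = t ^ 2 * qf A⁻¹ p := by
        simp only [qf, mdot_smul, real_inner_smul_left, real_inner_smul_right]; ring
      rw [h2, h3]
    have hcv : R (w' + t • p) ≤ (1 - t) * R w' + t * R z := by
      have := hconv.2 (Set.mem_univ w') (Set.mem_univ z) (by linarith) (le_of_lt ht)
        (by ring : (1 - t) + t = 1)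
      have heq : (1 - t) • w' + t • z = w' + t • p := by
        rw [hp, smul_sub, sub_smul, one_smul]; abel
      rwa [heq] at this
    have := h1.trans (by linarith [hq] : 2⁻¹ * qf A⁻¹ (w' + t • p - v) + R (w' + t • p)
      ≤ 2⁻¹ * qf A⁻¹ (w' - v) + t * c + t ^ 2 / 2 * qf A⁻¹ p + ((1 - t) * R w' + t * R z))
    have ht' : t * R w' ≤ t * c + t ^ 2 / 2 * qf A⁻¹ p + t * R z := by linarith
    have := (mul_le_mul_iff_right₀ ht).mp (by linarith : t * R w' ≤ t * (c + t / 2 * qf A⁻¹ p + R z))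
    linarith
  -- limit t → 0
  have hmain : R w' ≤ R z + c := by
    refine le_of_forall_pos_le_add ?_
    intro ε hε
    have hqnn : 0 ≤ qf A⁻¹ p := qf_nonneg hAinv.posSemidef p
    set t : ℝ := min 1 (ε / (qf A⁻¹ p + 1)) with htdef
    have htpos : 0 < t := lt_min one_pos (div_pos hε (by linarith))
    have ht1 : t ≤ 1 := min_le_left _ _
    have hbound : t / 2 * qf A⁻¹ p ≤ ε := by
      have h1 : t ≤ ε / (qf A⁻¹ p + 1) := min_le_right _ _
      have h2 : t * qf A⁻¹ p ≤ ε / (qf A⁻¹ p + 1) * (qf A⁻¹ p + 1) := by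
        have := mul_le_mul h1 (by linarith : qf A⁻¹ p ≤ qf A⁻¹ p + 1) hqnn
          (le_of_lt (div_pos hε (by linarith)))
        linarith
      rw [div_mul_cancel₀ _ (by linarith : qf A⁻¹ p + 1 ≠ 0)] at h2
      linarith
    have := key t htpos ht1
    linarith
  -- identify c
  have hcid : c = ⟪z - w', ζ⟫ + 2⁻¹ * (qf A⁻¹ (z - w) - qf A⁻¹ (w' - w) - qf A⁻¹ (w' - z)) := by
    have hinv : mdot A⁻¹ (mdot A ζ) = ζ := by
      have hdet : IsUnit A.det := isUnit_iff_ne_zero.mpr hA.det_pos.ne'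
      simp [mdot, Matrix.toEuclideanLin_apply, Matrix.mulVec_mulVec,
        Matrix.nonsing_inv_mul A hdet]
    have hsplit : w' - v = (w' - w) + mdot A ζ := by rw [hv]; abel
    have hc1 : c = ⟪w' - w, mdot A⁻¹ p⟫ + ⟪mdot A ζ, mdot A⁻¹ p⟫ := by
      rw [hc, hsplit, inner_add_left]
    have hc2 : ⟪mdot A ζ, mdot A⁻¹ p⟫ = ⟪z - w', ζ⟫ := by
      rw [inner_mdot_symm hH, hinv, ← hp]
    have hzw : z - w = p + (w' - w) := by rw [hp]; abel
    have hexp : qf A⁻¹ (z - w) = qf A⁻¹ p + 2 * ⟪w' - w, mdot A⁻¹ p⟫ + qf A⁻¹ (w' - w) := by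
      rw [hzw, qf_expand hH]
    have hnegp : qf A⁻¹ (w' - z) = qf A⁻¹ p := by
      rw [show w' - z = -p by rw [hp]; abel, qf_neg]
    rw [hc1, hc2, hexp, hnegp]; ring
  rw [hcid] at hmain
  linarith
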